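/- A binary algebra is a medial quandle if and only if it is isomorphic to the sum of an indecomposable affine mesh; moreover, for a medial quandle Q, the mesh can be chosen so that its fibres are exactly the orbits of Q (as subquandles). -/

import Mathlib

/-- The set of left translations of a binary algebra `(Q, op)`, viewed as permutations:
permutations `f` such that `f x = op a x` for some `a`. -/
def translations {Q : Type*} (op : Q → Q → Q) : Set (Equiv.Perm Q) :=
  { f | ∃ a : Q, ∀ x : Q, f x = op a x }

/-- The (left) multiplication group `LMlt(Q)`: the subgroup of the symmetric group
generated by the left translations. -/
def LMlt {Q : Type*} (op : Q → Q → Q) : Subgroup (Equiv.Perm Q) :=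
  Subgroup.closure (translations op)

/-- The displacement group `Dis(Q)`: the subgroup generated by all `L_a * L_b⁻¹`. -/
def Dis {Q : Type*} (op : Q → Q → Q) : Subgroup (Equiv.Perm Q) :=
  Subgroup.closure { f | ∃ g ∈ translations op, ∃ h ∈ translations op, f = g * h⁻¹ }

/-- `(Q, op)` is a quandle: idempotent, left distributive, left quasigroup. -/
def IsQuandle {Q : Type*} (op : Q → Q → Q) : Prop :=
  (∀ x, op x x = x) ∧
  (∀ x y z, op x (op y z) = op (op x y) (op x z)) ∧
  (∀ x y, ∃! u, op x u = y)

/-- `(Q, op)` is medial. -/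
def IsMedial {Q : Type*} (op : Q → Q → Q) : Prop :=
  ∀ x y u v, op (op x y) (op u v) = op (op x u) (op y v)

/-- The orbit of `e` under the multiplication group. -/
def qOrbit {Q : Type*} (op : Q → Q → Q) (e : Q) : Set Q :=
  { y | ∃ f ∈ LMlt op, f e = y }

/-- The orbit of `e` under the displacement group. -/
def disOrbit {Q : Type*} (op : Q → Q → Q) (e : Q) : Set Q :=
  { y | ∃ f ∈ Dis op, f e = y }

/-- An affine mesh over an index set `I`: abelian groups `A i`, homomorphisms
`φ i j : A i →+ A j`, and constants `c i j ∈ A j`, satisfying (M1)–(M4). -/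
structure AffineMesh (I : Type*) (A : I → Type*) [∀ i, AddCommGroup (A i)] where
  φ : ∀ i j : I, A i →+ A j
  c : ∀ i j : I, A j
  m1 : ∀ i : I, Function.Bijective fun x : A i => x - φ i i x
  m2 : ∀ i : I, c i i = 0
  m3 : ∀ i j j' k : I, (φ j k).comp (φ i j) = (φ j' k).comp (φ i j')
  m4 : ∀ i j k : I, φ j k (c i j) = φ k k (c i k - c j k)

/-- The sum of an affine mesh: the binary operation on the disjoint union of the fibres,
`a * b = c i j + φ i j a + (1 - φ j j) b` for `a ∈ A i`, `b ∈ A j`. -/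
def AffineMesh.sum {I : Type*} {A : I → Type*} [∀ i, AddCommGroup (A i)]
    (M : AffineMesh I A) (x y : Σ i, A i) : Σ i, A i :=
  ⟨y.1, M.c x.1 y.1 + M.φ x.1 y.1 x.2 + (y.2 - M.φ y.1 y.1 y.2)⟩

/-- An affine mesh is indecomposable if every fibre `A j` is generated by the
sets `c i j + Im (φ i j)`, `i ∈ I`. -/
def AffineMesh.Indecomposable {I : Type*} {A : I → Type*} [∀ i, AddCommGroup (A i)]
    (M : AffineMesh I A) : Prop :=
  ∀ j : I, AddSubgroup.closure (⋃ i : I, Set.range fun a : A i => M.c i j + M.φ i j a) = ⊤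


universe u
namespace MQ

variable {Q : Type u} (op : Q → Q → Q)

/-- Left translation as a permutation, given the left quasigroup property. -/
noncomputable def Ltr (h : ∀ x y, ∃! u, op x u = y) (a : Q) : Equiv.Perm Q where
  toFun := op a
  invFun := fun y => (h a y).choose
  left_inv := fun x => ((h a (op a x)).choose_spec.2 x rfl).symm
  right_inv := fun y => (h a y).choose_spec.1

variable {op}
variable (h3 : ∀ x y, ∃! u, op x u = y)

theorem Ltr_apply (a x : Q) : Ltr op h3 a x = op a x := rfl

theorem Ltr_mem_translations (a : Q) : Ltr op h3 a ∈ translations op := ⟨a, fun _ => rfl⟩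

theorem eq_Ltr_of_mem {f : Equiv.Perm Q} (hf : f ∈ translations op) : ∃ a, f = Ltr op h3 a := by
  obtain ⟨a, ha⟩ := hf
  exact ⟨a, Equiv.ext fun x => ha x⟩

theorem Ltr_mem_LMlt (a : Q) : Ltr op h3 a ∈ LMlt op :=
  Subgroup.subset_closure (Ltr_mem_translations h3 a)

theorem LtrD_mem_Dis (a b : Q) : Ltr op h3 a * (Ltr op h3 b)⁻¹ ∈ Dis op :=
  Subgroup.subset_closure ⟨_, Ltr_mem_translations h3 a, _, Ltr_mem_translations h3 b, rfl⟩

theorem Dis_le_LMlt : Dis op ≤ LMlt op := by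
  apply Subgroup.closure_le (LMlt op) |>.2
  rintro f ⟨g, hg, h, hh, rfl⟩
  exact mul_mem (Subgroup.subset_closure hg) (inv_mem (Subgroup.subset_closure hh))

variable (h2 : ∀ x y z, op x (op y z) = op (op x y) (op x z))
include h3 h2

/-- Conjugation: `L_a L_b L_a⁻¹ = L_{a·b}`. -/
theorem Ltr_conj (a b : Q) :
    Ltr op h3 a * Ltr op h3 b * (Ltr op h3 a)⁻¹ = Ltr op h3 (op a b) := by
  apply Equiv.ext
  intro x
  show op a (op b ((Ltr op h3 a)⁻¹ x)) = op (op a b) x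
  rw [h2]
  congr 1
  exact (Ltr op h3 a).apply_symm_apply x

/-- Conjugation by any element of `LMlt`. -/
theorem conj_Ltr {f : Equiv.Perm Q} (hf : f ∈ LMlt op) (a : Q) :
    f * Ltr op h3 a * f⁻¹ = Ltr op h3 (f a) := by
  induction hf using Subgroup.closure_induction generalizing a with
  | mem t ht =>
    obtain ⟨b, rfl⟩ := eq_Ltr_of_mem h3 ht
    exact Ltr_conj h3 h2 b a
  | one => simpa using (by group : (1 : Equiv.Perm Q) * Ltr op h3 a * 1⁻¹ = Ltr op h3 a)
  | mul f g hf hg ihf ihg =>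
    have : f * (g * Ltr op h3 a * g⁻¹) * f⁻¹ = Ltr op h3 (f (g a)) := by
      rw [ihg, ihf]
    calc f * g * Ltr op h3 a * (f * g)⁻¹ = f * (g * Ltr op h3 a * g⁻¹) * f⁻¹ := by group
    _ = Ltr op h3 (f (g a)) := this
    _ = Ltr op h3 ((f * g) a) := rfl
  | inv f hf ihf =>
    have := ihf (f⁻¹ a)
    have h4 : Ltr op h3 (f (f⁻¹ a)) = Ltr op h3 a := by
      congr 1
      exact f.apply_symm_apply a
    rw [h4] at this
    calc f⁻¹ * Ltr op h3 a * f⁻¹⁻¹ = f⁻¹ * (f * Ltr op h3 (f⁻¹ a) * f⁻¹) * f⁻¹⁻¹ := by rw [this]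
    _ = Ltr op h3 (f⁻¹ a) := by group

/-- `Dis` is normalized by `LMlt`. -/
theorem conj_mem_Dis {f g : Equiv.Perm Q} (hf : f ∈ LMlt op) (hg : g ∈ Dis op) :
    f * g * f⁻¹ ∈ Dis op := by
  induction hg using Subgroup.closure_induction with
  | mem t ht =>
    obtain ⟨u, hu, v, hv, rfl⟩ := ht
    obtain ⟨a, rfl⟩ := eq_Ltr_of_mem h3 hu
    obtain ⟨b, rfl⟩ := eq_Ltr_of_mem h3 hv
    have : f * (Ltr op h3 a * (Ltr op h3 b)⁻¹) * f⁻¹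
        = (f * Ltr op h3 a * f⁻¹) * (f * Ltr op h3 b * f⁻¹)⁻¹ := by group
    rw [this, conj_Ltr h3 h2 hf, conj_Ltr h3 h2 hf]
    exact LtrD_mem_Dis h3 _ _
  | one => simpa using one_mem (Dis op)
  | mul x y hx hy ihx ihy =>
    have : f * (x * y) * f⁻¹ = (f * x * f⁻¹) * (f * y * f⁻¹) := by group
    rw [this]; exact mul_mem ihx ihy
  | inv x hx ihx =>
    have : f * x⁻¹ * f⁻¹ = (f * x * f⁻¹)⁻¹ := by group
    rw [this]; exact inv_mem ihx

end MQ
namespace MQ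
variable {Q : Type u} {op : Q → Q → Q}
variable (h3 : ∀ x y, ∃! u, op x u = y)
variable (h2 : ∀ x y z, op x (op y z) = op (op x y) (op x z))
variable (hm : IsMedial op)
include h3 h2 hm

/-- The key identity `L_y L_x⁻¹ L_u = L_u L_x⁻¹ L_y` in a medial quandle. -/
theorem key_identity (x y v : Q) :
    Ltr op h3 y * (Ltr op h3 x)⁻¹ * Ltr op h3 v
      = Ltr op h3 v * (Ltr op h3 x)⁻¹ * Ltr op h3 y := by
  have dag : ∀ a b c : Q, Ltr op h3 (op a b) * Ltr op h3 c = Ltr op h3 (op a c) * Ltr op h3 b := by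
    intro a b c
    apply Equiv.ext; intro w
    exact hm a b c w
  have conj := Ltr_conj h3 h2
  have e1 : Ltr op h3 (op x y) = Ltr op h3 x * Ltr op h3 y * (Ltr op h3 x)⁻¹ := (conj x y).symm
  have e2 : Ltr op h3 (op x v) = Ltr op h3 x * Ltr op h3 v * (Ltr op h3 x)⁻¹ := (conj x v).symm
  have := dag x y v
  rw [e1, e2] at this
  have := congrArg (fun g => (Ltr op h3 x)⁻¹ * g) this
  simpa [mul_assoc] using this

theorem dis_gen_comm (a b c d : Q) :
    Commute (Ltr op h3 a * (Ltr op h3 b)⁻¹) (Ltr op h3 c * (Ltr op h3 d)⁻¹) := by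
  have k := key_identity h3 h2 hm
  -- L_a L_b⁻¹ L_c L_d⁻¹ = L_c L_b⁻¹ L_a L_d⁻¹ = L_c L_d⁻¹ L_a L_b⁻¹
  have k1 : Ltr op h3 a * (Ltr op h3 b)⁻¹ * Ltr op h3 c
      = Ltr op h3 c * (Ltr op h3 b)⁻¹ * Ltr op h3 a := k b a c
  have k2 : Ltr op h3 a * (Ltr op h3 d)⁻¹ * Ltr op h3 b
      = Ltr op h3 b * (Ltr op h3 d)⁻¹ * Ltr op h3 a := k d a b
  have k2' : (Ltr op h3 b)⁻¹ * (Ltr op h3 a * (Ltr op h3 d)⁻¹)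
      = (Ltr op h3 d)⁻¹ * (Ltr op h3 a * (Ltr op h3 b)⁻¹) := by
    have := congrArg (fun g => (Ltr op h3 b)⁻¹ * g * (Ltr op h3 b)⁻¹) k2
    simpa [mul_assoc] using this
  unfold Commute SemiconjBy
  calc Ltr op h3 a * (Ltr op h3 b)⁻¹ * (Ltr op h3 c * (Ltr op h3 d)⁻¹)
      = (Ltr op h3 a * (Ltr op h3 b)⁻¹ * Ltr op h3 c) * (Ltr op h3 d)⁻¹ := by group
    _ = (Ltr op h3 c * (Ltr op h3 b)⁻¹ * Ltr op h3 a) * (Ltr op h3 d)⁻¹ := by rw [k1]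
    _ = Ltr op h3 c * ((Ltr op h3 b)⁻¹ * (Ltr op h3 a * (Ltr op h3 d)⁻¹)) := by group
    _ = Ltr op h3 c * ((Ltr op h3 d)⁻¹ * (Ltr op h3 a * (Ltr op h3 b)⁻¹)) := by rw [k2']
    _ = Ltr op h3 c * (Ltr op h3 d)⁻¹ * (Ltr op h3 a * (Ltr op h3 b)⁻¹) := by group

theorem Dis_comm {g h : Equiv.Perm Q} (hg : g ∈ Dis op) (hh : h ∈ Dis op) :
    Commute g h := by
  induction hg using Subgroup.closure_induction with
  | mem t ht =>
    induction hh using Subgroup.closure_induction with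
    | mem s hs =>
      obtain ⟨u, hu, v, hv, rfl⟩ := ht
      obtain ⟨u', hu', v', hv', rfl⟩ := hs
      obtain ⟨a, rfl⟩ := eq_Ltr_of_mem h3 hu
      obtain ⟨b, rfl⟩ := eq_Ltr_of_mem h3 hv
      obtain ⟨c, rfl⟩ := eq_Ltr_of_mem h3 hu'
      obtain ⟨d, rfl⟩ := eq_Ltr_of_mem h3 hv'
      exact dis_gen_comm h3 h2 hm a b c d
    | one => exact Commute.one_right _
    | mul x y hx hy ihx ihy => exact Commute.mul_right ihx ihy
    | inv x hx ihx => exact Commute.inv_right ihx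
  | one => exact Commute.one_left _
  | mul x y hx hy ihx ihy => exact Commute.mul_left ihx ihy
  | inv x hx ihx => exact Commute.inv_left ihx

/-- The commutator `[d, L_a]` does not depend on `a`, for `d ∈ Dis`. -/
theorem comm_indep {d : Equiv.Perm Q} (hd : d ∈ Dis op) (a b : Q) :
    d * Ltr op h3 a * d⁻¹ * (Ltr op h3 a)⁻¹ = d * Ltr op h3 b * d⁻¹ * (Ltr op h3 b)⁻¹ := by
  set La := Ltr op h3 a
  set Lb := Ltr op h3 b
  have hw : La⁻¹ * Lb ∈ Dis op := by
    have h1 : Lb * La⁻¹ ∈ Dis op := LtrD_mem_Dis h3 b a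
    have h2' : La⁻¹ * (Lb * La⁻¹) * La⁻¹⁻¹ ∈ Dis op :=
      conj_mem_Dis h3 h2 (inv_mem (Ltr_mem_LMlt h3 a)) h1
    simpa [mul_assoc] using h2'
  have hcomm : Commute d⁻¹ (La⁻¹ * Lb) := (Dis_comm h3 h2 hm (inv_mem hd) hw)
  have hb : Lb = La * (La⁻¹ * Lb) := by group
  rw [hb]
  symm
  set w := La⁻¹ * Lb
  calc d * (La * w) * d⁻¹ * (La * w)⁻¹
      = d * La * (w * d⁻¹ * w⁻¹) * La⁻¹ := by group
    _ = d * La * (d⁻¹ * w * w⁻¹) * La⁻¹ := by rw [hcomm.symm.eq]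
    _ = d * La * d⁻¹ * La⁻¹ := by group

end MQ
namespace MQ
variable {Q : Type u} {op : Q → Q → Q}

/-- The orbit setoid: `x ≈ y` iff some element of `Dis` maps `x` to `y`. -/
def orbSetoid (op : Q → Q → Q) : Setoid Q where
  r x y := ∃ g ∈ Dis op, g x = y
  iseqv := by
    constructor
    · exact fun x => ⟨1, one_mem _, rfl⟩
    · rintro x y ⟨g, hg, rfl⟩
      exact ⟨g⁻¹, inv_mem hg, g.symm_apply_apply x⟩
    · rintro x y z ⟨g, hg, rfl⟩ ⟨h, hh, rfl⟩
      exact ⟨h * g, mul_mem hh hg, rfl⟩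

variable (h3 : ∀ x y, ∃! u, op x u = y)
variable (h2 : ∀ x y z, op x (op y z) = op (op x y) (op x z))
variable (h1 : ∀ x, op x x = x)

/-- The index type: the set of orbits. -/
def Ix (op : Q → Q → Q) : Type u := Quotient (orbSetoid op)

/-- The fibre over an orbit. -/
def Fib (op : Q → Q → Q) (i : Ix op) : Type u := {x : Q // Quotient.mk (orbSetoid op) x = i}

/-- Base point of an orbit. -/
noncomputable def bp (op : Q → Q → Q) (i : Ix op) : Q := Quotient.out i

theorem bp_mk (i : Ix op) : Quotient.mk (orbSetoid op) (bp op i) = i := Quotient.out_eq i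

include h3 h1

/-- Points in the `LMlt`-orbit are in the `Dis`-orbit. -/
theorem lmlt_orbit_dis {f : Equiv.Perm Q} (hf : f ∈ LMlt op) :
    ∀ x : Q, ∃ g ∈ Dis op, g x = f x := by
  induction hf using Subgroup.closure_induction with
  | mem t ht =>
    intro x
    obtain ⟨a, rfl⟩ := eq_Ltr_of_mem h3 ht
    refine ⟨Ltr op h3 a * (Ltr op h3 x)⁻¹, LtrD_mem_Dis h3 a x, ?_⟩
    show Ltr op h3 a ((Ltr op h3 x)⁻¹ x) = Ltr op h3 a x
    congr 1
    have : Ltr op h3 x x = x := h1 x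
    calc (Ltr op h3 x)⁻¹ x = (Ltr op h3 x)⁻¹ (Ltr op h3 x x) := by rw [this]
    _ = x := (Ltr op h3 x).symm_apply_apply x
  | one => exact fun x => ⟨1, one_mem _, rfl⟩
  | mul f g hf hg ihf ihg =>
    intro x
    obtain ⟨g2, hg2, e2⟩ := ihg x
    obtain ⟨g1, hg1, e1⟩ := ihf (g x)
    refine ⟨g1 * g2, mul_mem hg1 hg2, ?_⟩
    show g1 (g2 x) = f (g x)
    rw [e2, e1]
  | inv f hf ihf =>
    intro x
    obtain ⟨g, hg, e⟩ := ihf (f⁻¹ x)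
    refine ⟨g⁻¹, inv_mem hg, ?_⟩
    have : f (f⁻¹ x) = x := f.apply_symm_apply x
    rw [this] at e
    conv_lhs => rw [← e]
    exact g.symm_apply_apply _

theorem orbit_iff (x y : Q) :
    (∃ f ∈ LMlt op, f x = y) ↔ (orbSetoid op).r x y := by
  constructor
  · rintro ⟨f, hf, rfl⟩
    exact lmlt_orbit_dis h3 h1 hf x
  · rintro ⟨g, hg, rfl⟩
    exact ⟨g, Dis_le_LMlt hg, rfl⟩

theorem mk_apply_eq {f : Equiv.Perm Q} (hf : f ∈ LMlt op) (x : Q) :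
    Quotient.mk (orbSetoid op) (f x) = Quotient.mk (orbSetoid op) x := by
  apply Quotient.sound
  obtain ⟨g, hg, e⟩ := lmlt_orbit_dis h3 h1 hf x
  exact (orbSetoid op).iseqv.symm ⟨g, hg, e⟩

theorem exists_rep (i : Ix op) (x : Fib op i) : ∃ g ∈ Dis op, g (bp op i) = x.1 := by
  have hq : Quotient.mk (orbSetoid op) x.1 = Quotient.mk (orbSetoid op) (bp op i) := by
    rw [x.2, bp_mk]
  have h : (orbSetoid op).r x.1 (bp op i) := Quotient.exact hq
  obtain ⟨g, hg, e⟩ := h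
  exact ⟨g⁻¹, inv_mem hg, by rw [← e]; exact g.symm_apply_apply _⟩

/-- The chosen representative in `Dis` for an element of a fibre. -/
noncomputable def pick (i : Ix op) (x : Fib op i) : Equiv.Perm Q :=
  (exists_rep h3 h1 i x).choose

theorem pick_mem (i : Ix op) (x : Fib op i) : pick h3 h1 i x ∈ Dis op :=
  (exists_rep h3 h1 i x).choose_spec.1

theorem pick_apply (i : Ix op) (x : Fib op i) : pick h3 h1 i x (bp op i) = x.1 :=
  (exists_rep h3 h1 i x).choose_spec.2

variable (hm : IsMedial op)
include h2 hm

/-- Two displacements agreeing at the base point agree on the whole fibre. -/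
theorem agree {i : Ix op} {g h : Equiv.Perm Q} (hg : g ∈ Dis op) (hh : h ∈ Dis op)
    (he : g (bp op i) = h (bp op i)) (x : Fib op i) : g x.1 = h x.1 := by
  obtain ⟨k, hk, e⟩ := exists_rep h3 h1 i x
  have c1 : g * k = k * g := (Dis_comm h3 h2 hm hg hk).eq
  have c2 : h * k = k * h := (Dis_comm h3 h2 hm hh hk).eq
  calc g x.1 = (g * k) (bp op i) := by rw [← e]; rfl
  _ = k (g (bp op i)) := by rw [c1]; rfl
  _ = k (h (bp op i)) := by rw [he]
  _ = (h * k) (bp op i) := by rw [c2]; rfl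
  _ = h x.1 := by rw [← e]; rfl

end MQ
namespace MQ
variable {Q : Type u} {op : Q → Q → Q}
variable (h3 : ∀ x y, ∃! u, op x u = y)
variable (h2 : ∀ x y z, op x (op y z) = op (op x y) (op x z))
variable (h1 : ∀ x, op x x = x)
variable (hm : IsMedial op)
include h3 h1

theorem mem_fib_iff {i : Ix op} (x : Q) :
    Quotient.mk (orbSetoid op) x = i ↔ ∃ g ∈ Dis op, g (bp op i) = x := by
  constructor
  · intro hx
    exact exists_rep h3 h1 i ⟨x, hx⟩
  · rintro ⟨g, hg, rfl⟩
    rw [mk_apply_eq h3 h1 (Dis_le_LMlt hg), bp_mk]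

/-- Addition on a fibre. -/
noncomputable def fadd (i : Ix op) (x y : Fib op i) : Fib op i :=
  ⟨pick h3 h1 i x y.1, by
    rw [mk_apply_eq h3 h1 (Dis_le_LMlt (pick_mem h3 h1 i x)) y.1, y.2]⟩

/-- Negation on a fibre. -/
noncomputable def fneg (i : Ix op) (x : Fib op i) : Fib op i :=
  ⟨(pick h3 h1 i x)⁻¹ (bp op i), by
    rw [mk_apply_eq h3 h1 (Dis_le_LMlt (inv_mem (pick_mem h3 h1 i x))) _, bp_mk]⟩

omit h3 h1 in
/-- Zero of a fibre. -/
noncomputable def fzero (i : Ix op) : Fib op i := ⟨bp op i, bp_mk i⟩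

include h2 hm

theorem fadd_val {i : Ix op} {g : Equiv.Perm Q} (hg : g ∈ Dis op) (x y : Fib op i)
    (hx : g (bp op i) = x.1) : (fadd h3 h1 i x y).1 = g y.1 := by
  exact (agree h3 h2 h1 hm (pick_mem h3 h1 i x) hg ((pick_apply h3 h1 i x).trans hx.symm) y)

theorem fneg_val {i : Ix op} {g : Equiv.Perm Q} (hg : g ∈ Dis op) (x : Fib op i)
    (hx : g (bp op i) = x.1) : (fneg h3 h1 i x).1 = g⁻¹ (bp op i) := by
  show (pick h3 h1 i x)⁻¹ (bp op i) = g⁻¹ (bp op i)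
  have hp := pick_apply h3 h1 i x
  have hpm := pick_mem h3 h1 i x
  apply g.injective
  have hcomm : g * (pick h3 h1 i x)⁻¹ = (pick h3 h1 i x)⁻¹ * g :=
    (Dis_comm h3 h2 hm hg (inv_mem hpm)).eq
  calc g ((pick h3 h1 i x)⁻¹ (bp op i)) = (g * (pick h3 h1 i x)⁻¹) (bp op i) := rfl
  _ = ((pick h3 h1 i x)⁻¹ * g) (bp op i) := by rw [hcomm]
  _ = (pick h3 h1 i x)⁻¹ (g (bp op i)) := rfl
  _ = (pick h3 h1 i x)⁻¹ (pick h3 h1 i x (bp op i)) := by rw [hx, ← hp]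
  _ = bp op i := (pick h3 h1 i x).symm_apply_apply _
  _ = g (g⁻¹ (bp op i)) := (g.apply_symm_apply _).symm

/-- The abelian group structure on a fibre. -/
noncomputable def fibGroup (i : Ix op) : AddCommGroup (Fib op i) :=
  letI : Zero (Fib op i) := ⟨fzero i⟩
  letI : Add (Fib op i) := ⟨fadd h3 h1 i⟩
  letI : Neg (Fib op i) := ⟨fneg h3 h1 i⟩
  { add := fadd h3 h1 i
    zero := fzero i
    neg := fneg h3 h1 i
    add_assoc := by
      intro x y z
      apply Subtype.ext
      have hxy : (pick h3 h1 i x * pick h3 h1 i y) (bp op i) = (fadd h3 h1 i x y).1 := by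
        show pick h3 h1 i x (pick h3 h1 i y (bp op i)) = _
        rw [pick_apply]
        rfl
      have e1 : (fadd h3 h1 i (fadd h3 h1 i x y) z).1 = (pick h3 h1 i x * pick h3 h1 i y) z.1 :=
        fadd_val h3 h2 h1 hm (mul_mem (pick_mem h3 h1 i x) (pick_mem h3 h1 i y)) _ z hxy
      show (fadd h3 h1 i (fadd h3 h1 i x y) z).1 = (fadd h3 h1 i x (fadd h3 h1 i y z)).1
      rw [e1]
      show pick h3 h1 i x (pick h3 h1 i y z.1) = pick h3 h1 i x ((fadd h3 h1 i y z).1)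
      rfl
    add_comm := by
      intro x y
      apply Subtype.ext
      show pick h3 h1 i x y.1 = pick h3 h1 i y x.1
      have hcomm : pick h3 h1 i x * pick h3 h1 i y = pick h3 h1 i y * pick h3 h1 i x :=
        (Dis_comm h3 h2 hm (pick_mem h3 h1 i x) (pick_mem h3 h1 i y)).eq
      calc pick h3 h1 i x y.1 = (pick h3 h1 i x * pick h3 h1 i y) (bp op i) := by
            rw [← pick_apply h3 h1 i y]; rfl
      _ = (pick h3 h1 i y * pick h3 h1 i x) (bp op i) := by rw [hcomm]
      _ = pick h3 h1 i y x.1 := by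
            show pick h3 h1 i y (pick h3 h1 i x (bp op i)) = _
            rw [pick_apply]
    zero_add := by
      intro x
      apply Subtype.ext
      have : (fadd h3 h1 i (fzero i) x).1 = (1 : Equiv.Perm Q) x.1 :=
        fadd_val h3 h2 h1 hm (one_mem _) _ x rfl
      exact this
    add_zero := by
      intro x
      apply Subtype.ext
      show pick h3 h1 i x (bp op i) = x.1
      exact pick_apply h3 h1 i x
    neg_add_cancel := by
      intro x
      apply Subtype.ext
      have hrep : (pick h3 h1 i x)⁻¹ (bp op i) = (fneg h3 h1 i x).1 := rfl
      have e1 : (fadd h3 h1 i (fneg h3 h1 i x) x).1 = (pick h3 h1 i x)⁻¹ x.1 :=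
        fadd_val h3 h2 h1 hm (inv_mem (pick_mem h3 h1 i x)) _ x hrep
      show (fadd h3 h1 i (fneg h3 h1 i x) x).1 = (fzero i).1
      rw [e1, ← pick_apply h3 h1 i x]
      exact (pick h3 h1 i x).symm_apply_apply _
    nsmul := nsmulRec
    zsmul := zsmulRec
    nsmul_zero := fun _ => rfl
    nsmul_succ := fun _ _ => rfl
    zsmul_zero' := fun _ => rfl
    zsmul_succ' := fun _ _ => rfl
    zsmul_neg' := fun _ _ => rfl }

end MQ
namespace MQ
variable {Q : Type u} {op : Q → Q → Q}
variable (h3 : ∀ x y, ∃! u, op x u = y)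
variable (h2 : ∀ x y z, op x (op y z) = op (op x y) (op x z))
variable (h1 : ∀ x, op x x = x)
variable (hm : IsMedial op)

/-- The structure homomorphism function between fibres. -/
noncomputable def phifun (i j : Ix op) (x : Fib op i) : Fib op j :=
  ⟨(Ltr op h3 x.1 * (Ltr op h3 (bp op i))⁻¹) (bp op j), by
    rw [mk_apply_eq h3 h1 (Dis_le_LMlt (LtrD_mem_Dis h3 _ _)), bp_mk]⟩

/-- The constants. -/
noncomputable def cval (i j : Ix op) : Fib op j :=
  ⟨(Ltr op h3 (bp op i) * (Ltr op h3 (bp op j))⁻¹) (bp op j), by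
    rw [mk_apply_eq h3 h1 (Dis_le_LMlt (LtrD_mem_Dis h3 _ _)), bp_mk]⟩

/-- Elements of fibres from displacements. -/
noncomputable def mkel (j : Ix op) (g : Equiv.Perm Q) (hg : g ∈ Dis op) : Fib op j :=
  ⟨g (bp op j), by rw [mk_apply_eq h3 h1 (Dis_le_LMlt hg), bp_mk]⟩

include h2 h1 hm

theorem Ltr_bp (i : Ix op) : Ltr op h3 (bp op i) (bp op i) = bp op i := h1 _

theorem Ltr_inv_bp (i : Ix op) : (Ltr op h3 (bp op i))⁻¹ (bp op i) = bp op i := by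
  apply (Ltr op h3 (bp op i)).injective
  rw [← Equiv.Perm.mul_apply, mul_inv_cancel, Equiv.Perm.one_apply, Ltr_bp h3 h2 h1 hm i]

theorem mkel_add (j : Ix op) {g h : Equiv.Perm Q} (hg : g ∈ Dis op) (hh : h ∈ Dis op) :
    fadd h3 h1 j (mkel h3 h1 j g hg) (mkel h3 h1 j h hh) = mkel h3 h1 j (g * h) (mul_mem hg hh) := by
  apply Subtype.ext
  rw [fadd_val h3 h2 h1 hm hg _ _ rfl]
  rfl

theorem mkel_neg (j : Ix op) {g : Equiv.Perm Q} (hg : g ∈ Dis op) :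
    fneg h3 h1 j (mkel h3 h1 j g hg) = mkel h3 h1 j g⁻¹ (inv_mem hg) := by
  apply Subtype.ext
  rw [fneg_val h3 h2 h1 hm hg _ rfl]
  rfl

theorem mkel_congr (j : Ix op) {g h : Equiv.Perm Q} (hg : g ∈ Dis op) (hh : h ∈ Dis op)
    (e : g = h) : mkel h3 h1 j g hg = mkel h3 h1 j h hh := by
  apply Subtype.ext
  show g (bp op j) = h (bp op j)
  rw [e]

/-- The left translation of a fibre element, conjugated. -/
theorem Ltr_elem {i : Ix op} {g : Equiv.Perm Q} (hg : g ∈ Dis op) (x : Fib op i)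
    (hx : g (bp op i) = x.1) :
    Ltr op h3 x.1 = g * Ltr op h3 (bp op i) * g⁻¹ := by
  rw [← hx]
  exact (conj_Ltr h3 h2 (Dis_le_LMlt hg) _).symm

/-- The fundamental displacement representing `φ i j x`. -/
theorem phifun_rep (i j : Ix op) (x : Fib op i) :
    (Ltr op h3 x.1 * (Ltr op h3 (bp op i))⁻¹) (bp op j) = (phifun h3 h1 i j x).1 := rfl

theorem phifun_add (i j : Ix op) (x y : Fib op i) :
    phifun h3 h1 i j (fadd h3 h1 i x y)
      = fadd h3 h1 j (phifun h3 h1 i j x) (phifun h3 h1 i j y) := by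
  apply Subtype.ext
  set Li := Ltr op h3 (bp op i) with hLi
  set g := pick h3 h1 i x with hgdef
  set h := pick h3 h1 i y with hhdef
  have hgD : g ∈ Dis op := pick_mem h3 h1 i x
  have hhD : h ∈ Dis op := pick_mem h3 h1 i y
  have hgx : g (bp op i) = x.1 := pick_apply h3 h1 i x
  have hhy : h (bp op i) = y.1 := pick_apply h3 h1 i y
  -- u g and u h
  have eux : Ltr op h3 x.1 * Li⁻¹ = g * Li * g⁻¹ * Li⁻¹ := by
    rw [Ltr_elem h3 h2 h1 hm hgD x hgx]
  have euy : Ltr op h3 y.1 * Li⁻¹ = h * Li * h⁻¹ * Li⁻¹ := by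
    rw [Ltr_elem h3 h2 h1 hm hhD y hhy]
  have uxD : Ltr op h3 x.1 * Li⁻¹ ∈ Dis op := LtrD_mem_Dis h3 _ _
  have uyD : Ltr op h3 y.1 * Li⁻¹ ∈ Dis op := LtrD_mem_Dis h3 _ _
  -- LHS
  have hval : (fadd h3 h1 i x y).1 = (g * h) (bp op i) := by
    rw [fadd_val h3 h2 h1 hm hgD x y hgx, ← hhy]
    rfl
  have lhs1 : (phifun h3 h1 i j (fadd h3 h1 i x y)).1
      = ((g * h) * Li * (g * h)⁻¹ * Li⁻¹) (bp op j) := by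
    rw [← phifun_rep h3 h2 h1 hm, Ltr_elem h3 h2 h1 hm (mul_mem hgD hhD) _ hval.symm]
  -- RHS
  have rhs1 : (fadd h3 h1 j (phifun h3 h1 i j x) (phifun h3 h1 i j y)).1
      = ((Ltr op h3 x.1 * Li⁻¹) * (Ltr op h3 y.1 * Li⁻¹)) (bp op j) := by
    rw [fadd_val h3 h2 h1 hm uxD _ _ (phifun_rep h3 h2 h1 hm i j x), ← phifun_rep h3 h2 h1 hm _ _ _]
    rfl
  rw [lhs1, rhs1, eux, euy]
  have hc : Commute g (h * Li * h⁻¹ * Li⁻¹) :=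
    Dis_comm h3 h2 hm hgD (by rw [← euy]; exact uyD)
  have key : (g * h) * Li * (g * h)⁻¹ * Li⁻¹
      = (g * Li * g⁻¹ * Li⁻¹) * (h * Li * h⁻¹ * Li⁻¹) := by
    have hc2 : Commute (g * Li * g⁻¹ * Li⁻¹) (h * Li * h⁻¹ * Li⁻¹) :=
      Dis_comm h3 h2 hm (by rw [← eux]; exact uxD) (by rw [← euy]; exact uyD)
    calc (g * h) * Li * (g * h)⁻¹ * Li⁻¹
        = g * (h * Li * h⁻¹ * Li⁻¹) * (Li * g⁻¹ * Li⁻¹) := by group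
      _ = (g * (h * Li * h⁻¹ * Li⁻¹)) * (Li * g⁻¹ * Li⁻¹) := by group
      _ = ((h * Li * h⁻¹ * Li⁻¹) * g) * (Li * g⁻¹ * Li⁻¹) := by rw [hc.eq]
      _ = (h * Li * h⁻¹ * Li⁻¹) * (g * Li * g⁻¹ * Li⁻¹) := by group
      _ = (g * Li * g⁻¹ * Li⁻¹) * (h * Li * h⁻¹ * Li⁻¹) := hc2.symm.eq
  rw [key]

/-- `x - φ i i x` has value `L_{e_i} x`. -/
theorem sub_phi_val (i : Ix op) (x : Fib op i) :
    (fadd h3 h1 i x (fneg h3 h1 i (phifun h3 h1 i i x))).1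
      = Ltr op h3 (bp op i) x.1 := by
  set Li := Ltr op h3 (bp op i) with hLi
  set g := pick h3 h1 i x with hgdef
  have hgD : g ∈ Dis op := pick_mem h3 h1 i x
  have hgx : g (bp op i) = x.1 := pick_apply h3 h1 i x
  have uxD : Ltr op h3 x.1 * Li⁻¹ ∈ Dis op := LtrD_mem_Dis h3 _ _
  have e1 : (fneg h3 h1 i (phifun h3 h1 i i x)).1
      = (Ltr op h3 x.1 * Li⁻¹)⁻¹ (bp op i) :=
    fneg_val h3 h2 h1 hm uxD _ (phifun_rep h3 h2 h1 hm i i x)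
  have e2 : (fadd h3 h1 i x (fneg h3 h1 i (phifun h3 h1 i i x))).1
      = (g * (Ltr op h3 x.1 * Li⁻¹)⁻¹) (bp op i) := by
    rw [fadd_val h3 h2 h1 hm hgD _ _ hgx, e1]
    rfl
  rw [e2]
  have eux : Ltr op h3 x.1 = g * Li * g⁻¹ := Ltr_elem h3 h2 h1 hm hgD x hgx
  have ht : Li * g * Li⁻¹ ∈ Dis op :=
    conj_mem_Dis h3 h2 (Ltr_mem_LMlt h3 _) hgD
  have hc : Commute g (Li * g * Li⁻¹) := Dis_comm h3 h2 hm hgD ht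
  have key : g * (Ltr op h3 x.1 * Li⁻¹)⁻¹ = Li * g * Li⁻¹ := by
    rw [eux]
    calc g * (g * Li * g⁻¹ * Li⁻¹)⁻¹ = g * (Li * g * Li⁻¹) * g⁻¹ := by group
    _ = (Li * g * Li⁻¹) * g * g⁻¹ := by rw [hc.eq]
    _ = Li * g * Li⁻¹ := by group
  rw [key]
  show Li (g (Li⁻¹ (bp op i))) = Li x.1
  rw [Ltr_inv_bp h3 h2 h1 hm i, hgx]

end MQ
namespace MQ
variable {Q : Type u} {op : Q → Q → Q}
variable (h3 : ∀ x y, ∃! u, op x u = y)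
variable (h2 : ∀ x y z, op x (op y z) = op (op x y) (op x z))
variable (h1 : ∀ x, op x x = x)
variable (hm : IsMedial op)
include h2 h1 hm

/-- (M1): `x ↦ x - φ i i x` is bijective. -/
theorem m1_holds (i : Ix op) :
    Function.Bijective (fun x : Fib op i =>
      fadd h3 h1 i x (fneg h3 h1 i (phifun h3 h1 i i x))) := by
  constructor
  · intro x y hxy
    have := congrArg Subtype.val hxy
    rw [sub_phi_val h3 h2 h1 hm i x, sub_phi_val h3 h2 h1 hm i y] at this
    exact Subtype.ext ((Ltr op h3 (bp op i)).injective this)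
  · intro y
    refine ⟨⟨(Ltr op h3 (bp op i))⁻¹ y.1, ?_⟩, ?_⟩
    · rw [mk_apply_eq h3 h1 (inv_mem (Ltr_mem_LMlt h3 _)), y.2]
    · apply Subtype.ext
      refine (sub_phi_val h3 h2 h1 hm i _).trans ?_
      exact (Ltr op h3 (bp op i)).apply_symm_apply y.1

/-- (M3) at the level of values. -/
theorem m3_holds (i j j' k : Ix op) (x : Fib op i) :
    phifun h3 h1 j k (phifun h3 h1 i j x) = phifun h3 h1 j' k (phifun h3 h1 i j' x) := by
  apply Subtype.ext
  set d := Ltr op h3 x.1 * (Ltr op h3 (bp op i))⁻¹ with hd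
  have hdD : d ∈ Dis op := LtrD_mem_Dis h3 _ _
  have key : ∀ l : Ix op, (phifun h3 h1 l k (phifun h3 h1 i l x)).1
      = (d * Ltr op h3 (bp op l) * d⁻¹ * (Ltr op h3 (bp op l))⁻¹) (bp op k) := by
    intro l
    rw [← phifun_rep h3 h2 h1 hm l k,
      Ltr_elem h3 h2 h1 hm hdD _ (phifun_rep h3 h2 h1 hm i l x)]
  rw [key j, key j', comm_indep h3 h2 hm hdD (bp op j) (bp op j')]

/-- (M4) at the level of values. -/
theorem m4_holds (i j k : Ix op) :
    phifun h3 h1 j k (cval h3 h1 i j)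
      = phifun h3 h1 k k (fadd h3 h1 k (cval h3 h1 i k) (fneg h3 h1 k (cval h3 h1 j k))) := by
  apply Subtype.ext
  set Li := Ltr op h3 (bp op i)
  set Lj := Ltr op h3 (bp op j)
  set Lk := Ltr op h3 (bp op k)
  have hdD : Li * Lj⁻¹ ∈ Dis op := LtrD_mem_Dis h3 _ _
  have crep : (Li * Lj⁻¹) (bp op j) = (cval h3 h1 i j).1 := rfl
  have lhs1 : (phifun h3 h1 j k (cval h3 h1 i j)).1
      = ((Li * Lj⁻¹) * Lj * (Li * Lj⁻¹)⁻¹ * Lj⁻¹) (bp op k) := by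
    rw [← phifun_rep h3 h2 h1 hm j k, Ltr_elem h3 h2 h1 hm hdD _ crep]
  have hsub : (fadd h3 h1 k (cval h3 h1 i k) (fneg h3 h1 k (cval h3 h1 j k))).1
      = ((Li * Lk⁻¹) * (Lj * Lk⁻¹)⁻¹) (bp op k) := by
    rw [fadd_val h3 h2 h1 hm (LtrD_mem_Dis h3 _ _) _ _ rfl,
      fneg_val h3 h2 h1 hm (LtrD_mem_Dis h3 _ _) _ rfl]
    rfl
  have e2 : ((Li * Lk⁻¹) * (Lj * Lk⁻¹)⁻¹) = Li * Lj⁻¹ := by group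
  rw [e2] at hsub
  have rhs1 : (phifun h3 h1 k k (fadd h3 h1 k (cval h3 h1 i k) (fneg h3 h1 k (cval h3 h1 j k)))).1
      = ((Li * Lj⁻¹) * Lk * (Li * Lj⁻¹)⁻¹ * Lk⁻¹) (bp op k) := by
    rw [← phifun_rep h3 h2 h1 hm k k, Ltr_elem h3 h2 h1 hm hdD _ hsub.symm]
  rw [lhs1, rhs1, comm_indep h3 h2 hm hdD (bp op j) (bp op k)]

/-- The sum operation value: `c i j + φ i j x + (y - φ j j y) = x * y`. -/
theorem sum_val (x y : Q) :
    (fadd h3 h1 (Quotient.mk (orbSetoid op) y)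
      (fadd h3 h1 _ (cval h3 h1 (Quotient.mk (orbSetoid op) x) _)
        (phifun h3 h1 (Quotient.mk (orbSetoid op) x) _ ⟨x, rfl⟩))
      (fadd h3 h1 _ (⟨y, rfl⟩ : Fib op (Quotient.mk (orbSetoid op) y))
        (fneg h3 h1 _ (phifun h3 h1 _ _ (⟨y, rfl⟩ : Fib op (Quotient.mk (orbSetoid op) y)))))).1
      = op x y := by
  set i := Quotient.mk (orbSetoid op) x
  set j := Quotient.mk (orbSetoid op) y
  set Li := Ltr op h3 (bp op i)
  set Lj := Ltr op h3 (bp op j)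
  set x' : Fib op i := ⟨x, rfl⟩
  set y' : Fib op j := ⟨y, rfl⟩
  have r1D : (Li * Lj⁻¹) * (Ltr op h3 x * Li⁻¹) ∈ Dis op :=
    mul_mem (LtrD_mem_Dis h3 _ _) (LtrD_mem_Dis h3 _ _)
  have s1val : (fadd h3 h1 j (cval h3 h1 i j) (phifun h3 h1 i j x')).1
      = ((Li * Lj⁻¹) * (Ltr op h3 x * Li⁻¹)) (bp op j) := by
    refine (fadd_val h3 h2 h1 hm (LtrD_mem_Dis h3 (bp op i) (bp op j)) _ _ rfl).trans ?_
    rfl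
  have s2val : (fadd h3 h1 j y' (fneg h3 h1 j (phifun h3 h1 j j y'))).1 = Lj y :=
    sub_phi_val h3 h2 h1 hm j y'
  have tot : (fadd h3 h1 j
      (fadd h3 h1 j (cval h3 h1 i j) (phifun h3 h1 i j x'))
      (fadd h3 h1 j y' (fneg h3 h1 j (phifun h3 h1 j j y')))).1
      = ((Li * Lj⁻¹) * (Ltr op h3 x * Li⁻¹)) ((fadd h3 h1 j y' (fneg h3 h1 j (phifun h3 h1 j j y'))).1) :=
    fadd_val h3 h2 h1 hm r1D _ _ s1val.symm
  rw [tot, s2val]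
  have hc : Commute (Li * Lj⁻¹) (Ltr op h3 x * Li⁻¹) :=
    Dis_comm h3 h2 hm (LtrD_mem_Dis h3 _ _) (LtrD_mem_Dis h3 _ _)
  have key : (Li * Lj⁻¹) * (Ltr op h3 x * Li⁻¹) = Ltr op h3 x * Lj⁻¹ := by
    rw [hc.eq]
    group
  rw [key]
  show Ltr op h3 x (Lj⁻¹ (Lj y)) = op x y
  rw [← Equiv.Perm.mul_apply Lj⁻¹ Lj y, inv_mul_cancel, Equiv.Perm.one_apply]
  rfl

/-- Generators of indecomposability. -/
theorem gen_eq (j : Ix op) (a : Q) :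
    fadd h3 h1 j (cval h3 h1 (Quotient.mk (orbSetoid op) a) j)
      (phifun h3 h1 (Quotient.mk (orbSetoid op) a) j ⟨a, rfl⟩)
      = mkel h3 h1 j (Ltr op h3 a * (Ltr op h3 (bp op j))⁻¹) (LtrD_mem_Dis h3 _ _) := by
  apply Subtype.ext
  set i := Quotient.mk (orbSetoid op) a
  set Li := Ltr op h3 (bp op i)
  set Lj := Ltr op h3 (bp op j)
  rw [fadd_val h3 h2 h1 hm (LtrD_mem_Dis h3 (bp op i) (bp op j)) _ _ rfl]
  show ((Li * Lj⁻¹) * (Ltr op h3 a * Li⁻¹)) (bp op j) = (Ltr op h3 a * Lj⁻¹) (bp op j)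
  have hc : Commute (Li * Lj⁻¹) (Ltr op h3 a * Li⁻¹) :=
    Dis_comm h3 h2 hm (LtrD_mem_Dis h3 _ _) (LtrD_mem_Dis h3 _ _)
  have key : (Li * Lj⁻¹) * (Ltr op h3 a * Li⁻¹) = Ltr op h3 a * Lj⁻¹ := by
    rw [hc.eq]; group
  rw [key]

end MQ
namespace MQ

section Back
variable {I : Type u} {A : I → Type u} [∀ i, AddCommGroup (A i)] (M : AffineMesh I A)

theorem sum_self (p : Σ i, A i) : M.sum p p = p := by
  obtain ⟨i, a⟩ := p
  show (⟨i, M.c i i + M.φ i i a + (a - M.φ i i a)⟩ : Σ i, A i) = ⟨i, a⟩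
  have : M.c i i + M.φ i i a + (a - M.φ i i a) = a := by
    rw [M.m2]
    abel
  rw [this]

theorem sum_ld (p q r : Σ i, A i) :
    M.sum p (M.sum q r) = M.sum (M.sum p q) (M.sum p r) := by
  obtain ⟨i, a⟩ := p
  obtain ⟨j, b⟩ := q
  obtain ⟨k, c⟩ := r
  apply congrArg (Sigma.mk k)
  have e1 : ∀ t, M.φ k k (M.φ j k t) = M.φ j k (M.φ j j t) :=
    fun t => DFunLike.congr_fun (M.m3 j k j k) t
  have e2 : ∀ t, M.φ k k (M.φ i k t) = M.φ j k (M.φ i j t) :=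
    fun t => DFunLike.congr_fun (M.m3 i k j k) t
  have e4 : M.φ j k (M.c i j) = M.φ k k (M.c i k) - M.φ k k (M.c j k) := by
    rw [M.m4 i j k, map_sub]
  show M.c i k + M.φ i k a +
      ((M.c j k + M.φ j k b + (c - M.φ k k c)) - M.φ k k (M.c j k + M.φ j k b + (c - M.φ k k c)))
    = M.c j k + M.φ j k (M.c i j + M.φ i j a + (b - M.φ j j b)) +
      ((M.c i k + M.φ i k a + (c - M.φ k k c)) - M.φ k k (M.c i k + M.φ i k a + (c - M.φ k k c)))
  simp only [map_add, map_sub, e1, e2, e4]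
  abel

theorem sum_medial (p q r s : Σ i, A i) :
    M.sum (M.sum p q) (M.sum r s) = M.sum (M.sum p r) (M.sum q s) := by
  obtain ⟨i, a⟩ := p
  obtain ⟨j, b⟩ := q
  obtain ⟨k, c⟩ := r
  obtain ⟨l, d⟩ := s
  apply congrArg (Sigma.mk l)
  have e1 : ∀ t, M.φ l l (M.φ j l t) = M.φ j l (M.φ j j t) :=
    fun t => DFunLike.congr_fun (M.m3 j l j l) t
  have e2 : ∀ t, M.φ l l (M.φ k l t) = M.φ k l (M.φ k k t) :=
    fun t => DFunLike.congr_fun (M.m3 k l k l) t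
  have e3 : ∀ t, M.φ j l (M.φ i j t) = M.φ k l (M.φ i k t) :=
    fun t => DFunLike.congr_fun (M.m3 i j k l) t
  have e4 : M.φ j l (M.c i j) = M.φ l l (M.c i l) - M.φ l l (M.c j l) := by
    rw [M.m4 i j l, map_sub]
  have e5 : M.φ k l (M.c i k) = M.φ l l (M.c i l) - M.φ l l (M.c k l) := by
    rw [M.m4 i k l, map_sub]
  show M.c j l + M.φ j l (M.c i j + M.φ i j a + (b - M.φ j j b)) +
      ((M.c k l + M.φ k l c + (d - M.φ l l d)) - M.φ l l (M.c k l + M.φ k l c + (d - M.φ l l d)))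
    = M.c k l + M.φ k l (M.c i k + M.φ i k a + (c - M.φ k k c)) +
      ((M.c j l + M.φ j l b + (d - M.φ l l d)) - M.φ l l (M.c j l + M.φ j l b + (d - M.φ l l d)))
  simp only [map_add, map_sub, e1, e2, e3, e4, e5]
  abel

theorem sum_lq (p q : Σ i, A i) : ∃! r, M.sum p r = q := by
  obtain ⟨i, a⟩ := p
  obtain ⟨k, w⟩ := q
  set E := Equiv.ofBijective _ (M.m1 k) with hE
  refine ⟨⟨k, E.symm (w - M.c i k - M.φ i k a)⟩, ?_, ?_⟩
  · show (⟨k, M.c i k + M.φ i k a +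
        (E.symm (w - M.c i k - M.φ i k a) - M.φ k k (E.symm (w - M.c i k - M.φ i k a)))⟩ :
        Σ i, A i) = ⟨k, w⟩
    apply congrArg (Sigma.mk k)
    have : E.symm (w - M.c i k - M.φ i k a) - M.φ k k (E.symm (w - M.c i k - M.φ i k a))
        = w - M.c i k - M.φ i k a := by
      have := E.apply_symm_apply (w - M.c i k - M.φ i k a)
      exact this
    rw [this]
    abel
  · rintro ⟨k', s⟩ hs
    have h1 : k' = k := congrArg Sigma.fst hs
    subst h1
    have h2' : M.c i k' + M.φ i k' a + (s - M.φ k' k' s) = w := sigma_mk_injective hs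
    apply congrArg (Sigma.mk k')
    apply E.injective
    rw [E.apply_symm_apply]
    show s - M.φ k' k' s = w - M.c i k' - M.φ i k' a
    rw [← h2']
    abel

end Back
end MQ
namespace MQ
variable {Q : Type u} {op : Q → Q → Q}

/-- The canonical bijection between `Q` and the disjoint union of the fibres. -/
def toSigma (op : Q → Q → Q) : Q ≃ Σ i : Ix op, Fib op i where
  toFun x := ⟨Quotient.mk (orbSetoid op) x, ⟨x, rfl⟩⟩
  invFun p := p.2.1
  left_inv x := rfl
  right_inv := by
    rintro ⟨i, a, ha⟩
    subst ha
    rfl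

theorem sig_eq' (p q : Σ i : Ix op, Fib op i) (e1 : p.1 = q.1) (e2 : p.2.1 = q.2.1) :
    p = q := by
  obtain ⟨i, a⟩ := p
  obtain ⟨j, b⟩ := q
  cases e1
  exact congrArg _ (Subtype.ext e2)

variable (h3 : ∀ x y, ∃! u, op x u = y)
variable (h2 : ∀ x y z, op x (op y z) = op (op x y) (op x z))
variable (h1 : ∀ x, op x x = x)
variable (hm : IsMedial op)

include h3 h1 in
theorem mk_eq_iff (x y : Q) :
    Quotient.mk (orbSetoid op) x = Quotient.mk (orbSetoid op) y
      ↔ ∃ f ∈ LMlt op, f x = y := by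
  rw [orbit_iff h3 h1 x y]
  constructor
  · intro h
    exact Quotient.exact h
  · intro h
    exact Quotient.sound h

include h2 h1 hm

/-- Indecomposability of the canonical mesh. -/
theorem indecomp (j : Ix op) :
    letI : ∀ i : Ix op, AddCommGroup (Fib op i) := fun i => fibGroup h3 h2 h1 hm i
    AddSubgroup.closure (⋃ i : Ix op, Set.range fun a : Fib op i =>
      fadd h3 h1 j (cval h3 h1 i j) (phifun h3 h1 i j a)) = ⊤ := by
  letI : ∀ i : Ix op, AddCommGroup (Fib op i) := fun i => fibGroup h3 h2 h1 hm i
  set S : Set (Fib op j) := ⋃ i : Ix op, Set.range fun a : Fib op i =>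
      fadd h3 h1 j (cval h3 h1 i j) (phifun h3 h1 i j a) with hS
  show AddSubgroup.closure S = ⊤
  have hgen : ∀ a : Q, mkel h3 h1 j (Ltr op h3 a * (Ltr op h3 (bp op j))⁻¹)
      (LtrD_mem_Dis h3 _ _) ∈ S := by
    intro a
    apply Set.mem_iUnion.2
    refine ⟨Quotient.mk (orbSetoid op) a, ⟨⟨a, rfl⟩, ?_⟩⟩
    exact gen_eq h3 h2 h1 hm j a
  have main : ∀ g (hg : g ∈ Dis op), mkel h3 h1 j g hg ∈ AddSubgroup.closure S := by
    intro g hg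
    induction hg using Subgroup.closure_induction with
    | mem t ht =>
      obtain ⟨u, hu, v, hv, rfl⟩ := ht
      obtain ⟨a, rfl⟩ := eq_Ltr_of_mem h3 hu
      obtain ⟨b, rfl⟩ := eq_Ltr_of_mem h3 hv
      set Lj := Ltr op h3 (bp op j)
      have e : mkel h3 h1 j (Ltr op h3 a * (Ltr op h3 b)⁻¹)
          (Subgroup.subset_closure ⟨_, Ltr_mem_translations h3 a, _, Ltr_mem_translations h3 b, rfl⟩)
          = mkel h3 h1 j (Ltr op h3 a * Lj⁻¹) (LtrD_mem_Dis h3 _ _)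
            - mkel h3 h1 j (Ltr op h3 b * Lj⁻¹) (LtrD_mem_Dis h3 _ _) := by
        apply Subtype.ext
        show (Ltr op h3 a * (Ltr op h3 b)⁻¹) (bp op j)
          = (fadd h3 h1 j (mkel h3 h1 j (Ltr op h3 a * Lj⁻¹) (LtrD_mem_Dis h3 _ _))
              (fneg h3 h1 j (mkel h3 h1 j (Ltr op h3 b * Lj⁻¹) (LtrD_mem_Dis h3 _ _)))).1
        rw [fadd_val h3 h2 h1 hm (LtrD_mem_Dis h3 _ _) _ _ rfl,
          fneg_val h3 h2 h1 hm (LtrD_mem_Dis h3 _ _) _ rfl]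
        show (Ltr op h3 a * (Ltr op h3 b)⁻¹) (bp op j)
          = ((Ltr op h3 a * Lj⁻¹) * (Ltr op h3 b * Lj⁻¹)⁻¹) (bp op j)
        have : (Ltr op h3 a * Lj⁻¹) * (Ltr op h3 b * Lj⁻¹)⁻¹ = Ltr op h3 a * (Ltr op h3 b)⁻¹ := by
          group
        rw [this]
      rw [e]
      exact sub_mem (AddSubgroup.subset_closure (hgen a)) (AddSubgroup.subset_closure (hgen b))
    | one =>
      have e : mkel h3 h1 j 1 (one_mem _) = 0 := Subtype.ext rfl
      rw [e]
      exact zero_mem _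
    | mul g g' hg hg' ihg ihg' =>
      have e : mkel h3 h1 j (g * g') (mul_mem hg hg')
          = mkel h3 h1 j g hg + mkel h3 h1 j g' hg' := (mkel_add h3 h2 h1 hm j hg hg').symm
      rw [e]
      exact add_mem ihg ihg'
    | inv g hg ihg =>
      have e : mkel h3 h1 j g⁻¹ (inv_mem hg) = - mkel h3 h1 j g hg :=
        (mkel_neg h3 h2 h1 hm j hg).symm
      rw [e]
      exact neg_mem ihg
  rw [eq_top_iff]
  rintro x -
  have hx : x = mkel h3 h1 j (pick h3 h1 j x) (pick_mem h3 h1 j x) :=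
    Subtype.ext (pick_apply h3 h1 j x).symm
  rw [hx]
  exact main _ _

end MQ
/-- Theorem 3.14: a binary algebra is a medial quandle if and only if it is isomorphic
to the sum of an indecomposable affine mesh; the mesh can be chosen so that the fibres
correspond exactly to the orbits of the quandle. -/
theorem medial_quandle_iff_sum_of_indecomposable_mesh {Q : Type u} [Nonempty Q]
    (op : Q → Q → Q) :
    (IsQuandle op ∧ IsMedial op) ↔
      ∃ (I : Type u) (_ : Nonempty I) (A : I → Type u) (_ : ∀ i, AddCommGroup (A i))
        (M : AffineMesh I A), M.Indecomposable ∧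
        ∃ φ : Q ≃ (Σ i, A i),
          (∀ x y : Q, φ (op x y) = M.sum (φ x) (φ y)) ∧
          (∀ x y : Q, (φ x).1 = (φ y).1 ↔ ∃ f ∈ LMlt op, f x = y) := by
  constructor
  · rintro ⟨⟨hq1, hq2, hq3⟩, hm⟩
    letI inst : ∀ i : MQ.Ix op, AddCommGroup (MQ.Fib op i) :=
      fun i => MQ.fibGroup hq3 hq2 hq1 hm i
    refine ⟨MQ.Ix op, ⟨Quotient.mk (MQ.orbSetoid op) Classical.ofNonempty⟩, MQ.Fib op, inst,
      ⟨fun i j => AddMonoidHom.mk' (MQ.phifun hq3 hq1 i j) (MQ.phifun_add hq3 hq2 hq1 hm i j),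
       fun i j => MQ.cval hq3 hq1 i j,
       fun i => MQ.m1_holds hq3 hq2 hq1 hm i,
       fun i => ?_,
       fun i j j' k => AddMonoidHom.ext fun x => MQ.m3_holds hq3 hq2 hq1 hm i j j' k x,
       fun i j k => MQ.m4_holds hq3 hq2 hq1 hm i j k⟩,
      fun j => MQ.indecomp hq3 hq2 hq1 hm j,
      MQ.toSigma op, fun x y => ?_, fun x y => MQ.mk_eq_iff hq3 hq1 x y⟩
    · -- m2
      apply Subtype.ext
      show (MQ.Ltr op hq3 (MQ.bp op i) * (MQ.Ltr op hq3 (MQ.bp op i))⁻¹) (MQ.bp op i)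
        = MQ.bp op i
      rw [mul_inv_cancel]
      rfl
    · -- hom property
      apply MQ.sig_eq'
      · exact MQ.mk_apply_eq hq3 hq1 (MQ.Ltr_mem_LMlt hq3 x) y
      · exact (MQ.sum_val hq3 hq2 hq1 hm x y).symm
  · rintro ⟨I, hI, A, instA, M, hind, e, hhom, hfib⟩
    letI := instA
    have hinj := e.injective
    refine ⟨⟨?_, ?_, ?_⟩, ?_⟩
    · intro x
      apply hinj
      rw [hhom]
      exact MQ.sum_self M (e x)
    · intro x y z
      apply hinj
      simp only [hhom]
      exact MQ.sum_ld M _ _ _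
    · intro x y
      obtain ⟨r, hr, hru⟩ := MQ.sum_lq M (e x) (e y)
      refine ⟨e.symm r, ?_, ?_⟩
      · apply hinj
        rw [hhom, e.apply_symm_apply]
        exact hr
      · intro u hu
        have h4 : M.sum (e x) (e u) = e y := by
          rw [← hhom, hu]
        have h5 := hru (e u) h4
        rw [← h5]
        exact (e.symm_apply_apply u).symm
    · intro x y u v
      apply hinj
      simp only [hhom]
      exact MQ.sum_medial M _ _ _ _
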